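/- arXiv:1310.5313 — 2 statements merged into one kernel-verified Lean document; each statement's English description precedes it below -/
import Mathlib

section
/- For any sequence s = (s₁,s₂,…) of positive integers and any n ≥ 1, ∑_{t≥0} f_n^{(s)}(t) x^t = (1/(1−x)^{n+1}) ∑_e x^{asc(e)}, where the inner sum ranges over all s-inversion sequences e of length n. -/
open Finset

/-- Type B descent number of a signed word `σ : Fin m → ℤ`:
counts `i` with `σ i > σ (i+1)`, plus 1 if the last entry is positive. -/
def desB {m : ℕ} (σ : Fin m → ℤ) : ℕ :=
  (Finset.univ.filter fun i : Fin m =>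
    (if h : (i : ℕ) + 1 < m then σ ⟨(i : ℕ) + 1, h⟩ else 0) < σ i).card

/-- Ascent number of an `s`-inversion sequence `e` (with `s` 1-indexed),
using the convention `e₀ = 0`, `s₀ = 1`. -/
def asc {m : ℕ} (s : ℕ → ℕ) (e : Fin m → ℕ) : ℕ :=
  (Finset.univ.filter fun i : Fin m =>
    (if (i : ℕ) = 0 then (0 : ℚ)
     else (e ⟨(i : ℕ) - 1, Nat.lt_of_le_of_lt (Nat.sub_le _ _) i.isLt⟩ : ℚ) / s (i : ℕ))
      < (e i : ℚ) / s ((i : ℕ) + 1)).card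

/-- The finset of `s`-inversion sequences of length `m` (with `s` 1-indexed). -/
def invSeqs (s : ℕ → ℕ) (m : ℕ) : Finset (Fin m → ℕ) :=
  Fintype.piFinset fun i => Finset.range (s ((i : ℕ) + 1))

/-- `s = (1,4,3,8,5,12,…)`: `s_{2i-1} = 2i-1`, `s_{2i} = 4i` (1-indexed). -/
def sA (k : ℕ) : ℕ := if k % 2 = 1 then k else 2 * k

/-- `s = (2,2,6,4,10,6,…)`: `s_{2i-1} = 4i-2`, `s_{2i} = 2i` (1-indexed). -/
def sB (k : ℕ) : ℕ := if k % 2 = 1 then 2 * k else k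

/-- `s' = (1,1,3,2,5,3,…)`: `s'_{2i-1} = 2i-1`, `s'_{2i} = i` (1-indexed). -/
def sC (k : ℕ) : ℕ := if k % 2 = 1 then k else k / 2

/-- The lecture hall counting function `f_n^{(s)}(t)`: the number of `n`-tuples
`(λ₁,…,λₙ)` of nonnegative integers with `0 ≤ λ₁/s₁ ≤ ⋯ ≤ λₙ/sₙ ≤ t`. -/
def lhall (s : ℕ → ℕ) (n t : ℕ) : ℕ :=
  ((Fintype.piFinset fun i : Fin n => Finset.range (t * s ((i : ℕ) + 1) + 1)).filter
    fun lam => ∀ i : Fin n, ∀ h : (i : ℕ) + 1 < n,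
      lam i * s ((i : ℕ) + 2) ≤ lam ⟨(i : ℕ) + 1, h⟩ * s ((i : ℕ) + 1)).card

/-- The finset of signed permutations of length `m` on a multiset `M` of
positive integers: words `σ` whose multiset of absolute values is `M`. -/
def sperm (m : ℕ) (M : Multiset ℤ) : Finset (Fin m → ℤ) :=
  (Fintype.piFinset fun _ : Fin m => M.toFinset ∪ M.toFinset.image (fun x => -x)).filter
    fun σ => (Finset.univ.val.map fun i => |σ i|) = M

/-- The multiset `{1,1,2,2,…,n,n}`. -/
def Pmult (n : ℕ) : Multiset ℤ :=
  (Multiset.range n).bind fun k => {(k : ℤ) + 1, (k : ℤ) + 1}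

/-- The multiset `{1,1,2,2,…,n-1,n-1,n}`. -/
def Umult (n : ℕ) : Multiset ℤ :=
  ((Multiset.range (n - 1)).bind fun k => {(k : ℤ) + 1, (k : ℤ) + 1}) + {(n : ℤ)}

/-- `P_n`: signed permutations on `{1²,2²,…,n²}`. -/
def Pset (n : ℕ) : Finset (Fin (2 * n) → ℤ) := sperm (2 * n) (Pmult n)

/-- `U_n`: signed permutations on `{1²,2²,…,(n-1)²,n}`. -/
def Uset (n : ℕ) : Finset (Fin (2 * n - 1) → ℤ) := sperm (2 * n - 1) (Umult n)

/-- `V_n`: signed permutations on `{1²,2²,…,(n-1)²,n}` where `n` carries a minus sign. -/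
def Vset (n : ℕ) : Finset (Fin (2 * n - 1) → ℤ) :=
  (Uset n).filter fun σ => ∀ i, |σ i| = (n : ℤ) → σ i < 0

/-- `Ω_σ(t)`: the number of `σ`-compatible maps `g` with `g(σ₁) ≤ t`, recorded
as the tuple `(g(σ₁),…,g(σₙ))`. -/
def Omega {n : ℕ} (σ : Fin n → ℤ) (t : ℕ) : ℕ :=
  ((Fintype.piFinset fun _ : Fin n => Finset.range (t + 1)).filter fun g =>
    (∀ i : Fin n, ∀ h : (i : ℕ) + 1 < n,
      g ⟨(i : ℕ) + 1, h⟩ ≤ g i ∧ (σ ⟨(i : ℕ) + 1, h⟩ < σ i → g ⟨(i : ℕ) + 1, h⟩ < g i)) ∧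
    (∀ i : Fin n, (i : ℕ) = n - 1 → 0 < σ i → 1 ≤ g i)).card

/-- Linear extensions of the plane forest `F_n` consisting of `n` two-vertex trees:
`π j` is the vertex placed at position `j`, where the root of the `i`-th tree is
vertex `2i` and its child is vertex `2i+1`; roots must precede their children. -/
def linExts (n : ℕ) : Finset (Equiv.Perm (Fin (2 * n))) :=
  Finset.univ.filter fun π => ∀ i : Fin n,
    π.symm ⟨2 * (i : ℕ), by have := i.isLt; omega⟩ <
      π.symm ⟨2 * (i : ℕ) + 1, by have := i.isLt; omega⟩

/-- The signed labelings `L(F_n)`: for each `i` (0-indexed), the labels of the root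
and the child of the `i`-th tree form one of the four allowed pairs. -/
noncomputable def labelings (n : ℕ) : Finset (Fin (2 * n) → ℤ) :=
  (Fintype.piFinset fun _ : Fin (2 * n) => Finset.Icc (-(2 * n : ℤ)) (2 * n)).filter
    fun w => ∀ i : Fin n,
      (w ⟨2 * (i : ℕ), by have := i.isLt; omega⟩,
       w ⟨2 * (i : ℕ) + 1, by have := i.isLt; omega⟩) ∈
        ({(2 * (i : ℤ) + 2, 2 * (i : ℤ) + 1), (2 * (i : ℤ) + 2, -(2 * (i : ℤ) + 1)),
          (-(2 * (i : ℤ) + 2), 2 * (i : ℤ) + 1), (-(2 * (i : ℤ) + 1), -(2 * (i : ℤ) + 2))} :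
          Finset (ℤ × ℤ))

/-- The descent statistic `|{i : σᵢ > σᵢ₊₁}| + [σ₁ < 0]`. -/
def desA {m : ℕ} (σ : Fin m → ℤ) : ℕ :=
  (Finset.univ.filter fun i : Fin m =>
    if h : (i : ℕ) + 1 < m then σ ⟨(i : ℕ) + 1, h⟩ < σ i else False).card
  + (Finset.univ.filter fun i : Fin m => (i : ℕ) = 0 ∧ σ i < 0).card

/-- The map `σ₁⋯σₙ ↦ (−σₙ)(−σₙ₋₁)⋯(−σ₁)`. -/
def revNeg {m : ℕ} (σ : Fin m → ℤ) : Fin m → ℤ := fun i => -σ i.rev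

namespace Stmt18Aux

open Finset

/-- Natural-number version of the ascent predicate. -/
def ascP {n : ℕ} (s : ℕ → ℕ) (e : Fin n → ℕ) (j : Fin n) : Prop :=
  if (j : ℕ) = 0 then 0 < e j
  else e ⟨(j : ℕ) - 1, Nat.lt_of_le_of_lt (Nat.sub_le _ _) j.isLt⟩ * s ((j : ℕ) + 1)
    < e j * s (j : ℕ)

instance {n : ℕ} (s : ℕ → ℕ) (e : Fin n → ℕ) : DecidablePred (ascP s e) := fun j => by
  unfold ascP; infer_instance

theorem asc_eq {n : ℕ} (s : ℕ → ℕ) (hs : ∀ i, 1 ≤ i → 0 < s i) (e : Fin n → ℕ) :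
    asc s e = (univ.filter (ascP s e)).card := by
  unfold asc
  congr 1
  apply Finset.filter_congr
  intro j _
  by_cases hj : (j : ℕ) = 0
  · simp only [hj, if_pos, ascP, if_true]
    have hpos : (0 : ℚ) < s ((j : ℕ) + 1) := by
      exact_mod_cast hs _ (by omega)
    rw [hj] at hpos
    rw [lt_div_iff₀ hpos, zero_mul]
    exact_mod_cast Iff.rfl
  · simp only [hj, if_false, ascP, if_neg hj]
    have h1 : (0 : ℚ) < s (j : ℕ) := by exact_mod_cast hs _ (by omega)
    have h2 : (0 : ℚ) < s ((j : ℕ) + 1) := by exact_mod_cast hs _ (by omega)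
    rw [div_lt_div_iff₀ h1 h2]
    exact_mod_cast Iff.rfl

theorem antitone_of_adj {n : ℕ} (c : Fin n → ℕ)
    (h : ∀ i : Fin n, ∀ hi : (i : ℕ) + 1 < n, c ⟨(i : ℕ) + 1, hi⟩ ≤ c i) :
    ∀ j k : Fin n, j ≤ k → c k ≤ c j := by
  have key : ∀ d : ℕ, ∀ j k : Fin n, (k : ℕ) = (j : ℕ) + d → c k ≤ c j := by
    intro d
    induction d with
    | zero =>
      intro j k hk
      have : k = j := Fin.ext (by omega)
      simp [this]
    | succ d ih =>
      intro j k hk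
      have hd : (j : ℕ) + d < n := by have := k.isLt; omega
      have h1 : c k ≤ c ⟨(j : ℕ) + d, hd⟩ := by
        have := h ⟨(j : ℕ) + d, hd⟩ (by simpa using by omega : ((⟨(j : ℕ) + d, hd⟩ : Fin n) : ℕ) + 1 < n)
        have hk' : k = ⟨(j : ℕ) + d + 1, by omega⟩ := Fin.ext (by show (k : ℕ) = (j : ℕ) + d + 1; omega)
        rw [hk']
        exact this
      exact le_trans h1 (ih j ⟨(j : ℕ) + d, hd⟩ rfl)
  intro j k hjk
  exact key ((k : ℕ) - (j : ℕ)) j k (by have := Fin.le_def.mp hjk; omega)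

theorem card_dec (n m : ℕ) :
    ((Fintype.piFinset fun _ : Fin n => Finset.range m).filter
      (fun c : Fin n → ℕ =>
        ∀ i : Fin n, ∀ hi : (i : ℕ) + 1 < n, c ⟨(i : ℕ) + 1, hi⟩ ≤ c i)).card
      = Nat.multichoose m n := by
  have hsym : Nat.multichoose m n = Fintype.card (Sym (Fin m) n) := by
    rw [Sym.card_sym_eq_multichoose, Fintype.card_fin]
  rw [hsym, ← Finset.card_univ]
  have hofFn_get : ∀ (l : List ℕ) (h : l.length = n),
      (List.ofFn fun i : Fin n => l.get ⟨(i : ℕ), h ▸ i.isLt⟩) = l := by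
    intro l h
    subst h
    exact List.ofFn_get l
  have sort_get_eq : ∀ (M : Multiset ℕ) (c : Fin n → ℕ),
      ((List.ofFn c : Multiset ℕ) = M) → List.Pairwise (· ≥ ·) (List.ofFn c) →
      ∀ (i : Fin n) (h : (i : ℕ) < (Multiset.sort M (· ≥ ·)).length),
        (Multiset.sort M (· ≥ ·)).get ⟨(i : ℕ), h⟩ = c i := by
    intro M c hM hsorted i h
    have h3 : Multiset.sort M (· ≥ ·) = List.ofFn c := by
      apply List.Perm.eq_of_pairwise' (Multiset.pairwise_sort _ _) hsorted
      apply Multiset.coe_eq_coe.mp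
      rw [Multiset.sort_eq, hM]
    rw [List.get_of_eq h3, List.get_ofFn]
    congr 1
  refine Finset.card_bij'
    (fun c hc => (⟨Multiset.map
        (fun i : Fin n => (⟨c i, by
          have h1 := (Finset.mem_filter.mp hc).1
          exact Finset.mem_range.mp (Fintype.mem_piFinset.mp h1 i)⟩ : Fin m))
        Finset.univ.val, by simp⟩ : Sym (Fin m) n))
    (fun σ _ => fun i : Fin n =>
      (Multiset.sort (Multiset.map Fin.val σ.val) (· ≥ ·)).get
        ⟨(i : ℕ), by
          rw [Multiset.length_sort, Multiset.card_map, σ.prop]; exact i.isLt⟩)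
    (fun c hc => Finset.mem_univ _) ?_ ?_ ?_
  · -- backward map lands in the filter set
    intro σ _
    rw [Finset.mem_filter]
    refine ⟨?_, ?_⟩
    · rw [Fintype.mem_piFinset]
      intro i
      rw [Finset.mem_range]
      have hall : ∀ a ∈ Multiset.sort (Multiset.map Fin.val σ.val) (· ≥ ·), a < m := by
        intro a ha1
        rw [Multiset.mem_sort] at ha1
        obtain ⟨x, _, rfl⟩ := Multiset.mem_map.mp ha1
        exact x.isLt
      exact hall _ (List.get_mem _ _)
    · intro i hi
      exact (Multiset.pairwise_sort (α := ℕ) _ (· ≥ ·)).rel_get_of_lt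
        (Fin.mk_lt_mk.mpr (Nat.lt_succ_self _))
  · -- left inverse
    intro c hc
    funext i
    dsimp only
    have hadj := (Finset.mem_filter.mp hc).2
    have hsorted : List.Pairwise (· ≥ ·) (List.ofFn c) := by
      rw [List.pairwise_ofFn]
      intro a b hab
      exact antitone_of_adj c hadj a b (le_of_lt hab)
    apply sort_get_eq _ c ?_ hsorted
    rw [Multiset.map_map]
    exact (Fin.univ_val_map c).symm
  · -- right inverse
    intro σ _
    apply Subtype.ext
    dsimp only
    apply Multiset.map_injective (Fin.val_injective)
    rw [Multiset.map_map]
    have hlen : (Multiset.sort (Multiset.map Fin.val σ.val) (· ≥ ·)).length = n := by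
      rw [Multiset.length_sort, Multiset.card_map, σ.prop]
    conv_rhs => rw [← Multiset.sort_eq (α := ℕ) (Multiset.map Fin.val σ.val) (· ≥ ·)]
    rw [Fin.univ_val_map]
    exact congrArg _ (hofFn_get _ hlen)

theorem key (s : ℕ → ℕ) (hs : ∀ i, 1 ≤ i → 0 < s i) (n : ℕ) (hn : 1 ≤ n) (t : ℕ) :
    lhall s n t = ∑ e ∈ invSeqs s n, Nat.choose (t + n - asc s e) n := by
  classical
  have hspos : ∀ k : ℕ, 0 < s (k + 1) := fun k => hs _ (by omega)
  set E : (Fin n → ℕ) → (Fin n → ℕ) :=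
    fun lam i => (t * s ((i : ℕ) + 1) - lam i) % s ((i : ℕ) + 1) with hEdef
  unfold lhall
  rw [Finset.card_eq_sum_card_fiberwise (f := E) (t := invSeqs s n) (fun lam _ => by
    rw [Finset.mem_coe, invSeqs, Fintype.mem_piFinset]
    intro i
    exact Finset.mem_range.mpr (Nat.mod_lt _ (hspos (i : ℕ))))]
  apply Finset.sum_congr rfl
  intro e he
  have he' : ∀ i : Fin n, e i < s ((i : ℕ) + 1) := by
    intro i
    rw [invSeqs] at he
    exact Finset.mem_range.mp (Fintype.mem_piFinset.mp he i)
  -- ascent counting functions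
  obtain ⟨a', ha'⟩ : ∃ a', a' = (univ.filter (ascP s e)).card := ⟨_, rfl⟩
  set B : Fin n → ℕ := fun i =>
    (univ.filter fun j => ascP s e j ∧ i < j).card with hBdef
  set C : Fin n → ℕ := fun i =>
    (univ.filter fun j => ascP s e j ∧ j ≤ i).card with hCdef
  have ha'n : a' ≤ n := ha' ▸ le_trans (Finset.card_filter_le _ _) (by simp)
  have hCB : ∀ i : Fin n, C i + B i = a' := by
    intro i
    have hsplit := Finset.card_filter_add_card_filter_not
      (s := univ.filter (ascP s e)) (p := fun j => j ≤ i)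
    rw [Finset.filter_filter, Finset.filter_filter] at hsplit
    have h1 : (univ.filter fun j => ascP s e j ∧ j ≤ i)
        = univ.filter fun a => ascP s e a ∧ a ≤ i := rfl
    have h2 : (univ.filter fun j => ascP s e j ∧ i < j)
        = univ.filter fun a => ascP s e a ∧ ¬ a ≤ i := by
      apply Finset.filter_congr
      intro j _
      simp [not_le]
    show (univ.filter fun j => ascP s e j ∧ j ≤ i).card
      + (univ.filter fun j => ascP s e j ∧ i < j).card = a'
    rw [h1, h2, ha']
    exact hsplit
  have hsingle : ∀ x : Fin n,
      (univ.filter fun j => ascP s e j ∧ j = x).card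
        = if ascP s e x then 1 else 0 := by
    intro x
    split_ifs with h
    · rw [Finset.card_eq_one]
      refine ⟨x, ?_⟩
      ext y
      simp only [Finset.mem_filter, Finset.mem_univ, true_and, Finset.mem_singleton]
      constructor
      · rintro ⟨_, rfl⟩; rfl
      · rintro rfl; exact ⟨h, rfl⟩
    · rw [Finset.card_eq_zero]
      ext y
      simp only [Finset.mem_filter, Finset.mem_univ, true_and, Finset.notMem_empty,
        iff_false, not_and]
      rintro hy rfl
      exact h hy
  have hC0 : ∀ h0 : 0 < n,
      C ⟨0, h0⟩ = if ascP s e ⟨0, h0⟩ then 1 else 0 := by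
    intro h0
    show (univ.filter fun j => ascP s e j ∧ j ≤ (⟨0, h0⟩ : Fin n)).card = _
    rw [show (univ.filter fun j => ascP s e j ∧ j ≤ (⟨0, h0⟩ : Fin n))
        = univ.filter fun j => ascP s e j ∧ j = ⟨0, h0⟩ from
      Finset.filter_congr fun j _ => by
        simp only [Fin.le_def, Fin.ext_iff]
        constructor
        · rintro ⟨h1, h2⟩; exact ⟨h1, by omega⟩
        · rintro ⟨h1, h2⟩; exact ⟨h1, by omega⟩]
    exact hsingle _
  have hCstep : ∀ (k : ℕ) (hk : k + 1 < n),
      C ⟨k + 1, hk⟩ = C ⟨k, by omega⟩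
        + (if ascP s e ⟨k + 1, hk⟩ then 1 else 0) := by
    intro k hk
    show (univ.filter fun j => ascP s e j ∧ j ≤ (⟨k + 1, hk⟩ : Fin n)).card
      = (univ.filter fun j => ascP s e j ∧ j ≤ (⟨k, by omega⟩ : Fin n)).card
        + (if ascP s e ⟨k + 1, hk⟩ then 1 else 0)
    have hsplit : (univ.filter fun j => ascP s e j ∧ j ≤ (⟨k + 1, hk⟩ : Fin n))
        = (univ.filter fun j => ascP s e j ∧ j ≤ (⟨k, by omega⟩ : Fin n))
          ∪ (univ.filter fun j => ascP s e j ∧ j = (⟨k + 1, hk⟩ : Fin n)) := by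
      rw [← Finset.filter_or]
      apply Finset.filter_congr
      intro j _
      by_cases hP : ascP s e j <;>
        simp [hP, Fin.le_def, Fin.ext_iff] <;> omega
    have hdisj : Disjoint
        (univ.filter fun j => ascP s e j ∧ j ≤ (⟨k, by omega⟩ : Fin n))
        (univ.filter fun j => ascP s e j ∧ j = (⟨k + 1, hk⟩ : Fin n)) := by
      rw [Finset.disjoint_left]
      intro j hj1 hj2
      have h1 := (Finset.mem_filter.mp hj1).2.2
      have h2 := (Finset.mem_filter.mp hj2).2.2
      rw [Fin.le_def] at h1
      rw [Fin.ext_iff] at h2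
      have e1 : ((⟨k, by omega⟩ : Fin n) : ℕ) = k := rfl
      have e2 : ((⟨k + 1, hk⟩ : Fin n) : ℕ) = k + 1 := rfl
      omega
    rw [hsplit, Finset.card_union_of_disjoint hdisj, hsingle]
  have hB0 : ∀ hk : n - 1 < n, B ⟨n - 1, hk⟩ = 0 := by
    intro hk
    show (univ.filter fun j => ascP s e j ∧ (⟨n - 1, hk⟩ : Fin n) < j).card = 0
    rw [Finset.card_eq_zero]
    ext j
    simp only [Finset.mem_filter, Finset.mem_univ, true_and, Finset.notMem_empty,
      iff_false, not_and]
    intro _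
    rw [Fin.lt_def]
    have e1 : ((⟨n - 1, hk⟩ : Fin n) : ℕ) = n - 1 := rfl
    have := j.isLt
    omega
  have hBstep : ∀ (k : ℕ) (hk : k + 1 < n),
      B ⟨k, by omega⟩ = B ⟨k + 1, hk⟩
        + (if ascP s e ⟨k + 1, hk⟩ then 1 else 0) := by
    intro k hk
    have h1 := hCB ⟨k, by omega⟩
    have h2 := hCB ⟨k + 1, hk⟩
    have h3 := hCstep k hk
    omega
  -- ascent predicate unfoldings
  have hasc0 : ∀ h0 : 0 < n, ascP s e ⟨0, h0⟩ ↔ 0 < e ⟨0, h0⟩ := by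
    intro h0
    unfold ascP
    simp
  have hascstep : ∀ (k : ℕ) (hk : k + 1 < n),
      ascP s e ⟨k + 1, hk⟩ ↔
        e ⟨k, by omega⟩ * s (k + 2) < e ⟨k + 1, hk⟩ * s (k + 1) := by
    intro k hk
    unfold ascP
    simp
  -- positivity of C when e is positive
  have hF3 : ∀ (k : ℕ) (hk : k < n), 0 < e ⟨k, hk⟩ → 1 ≤ C ⟨k, hk⟩ := by
    intro k
    induction k with
    | zero =>
      intro hk hpos
      rw [hC0 hk, if_pos ((hasc0 hk).mpr hpos)]
    | succ k ih =>
      intro hk hpos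
      by_cases hA : ascP s e ⟨k + 1, hk⟩
      · rw [hCstep k hk, if_pos hA]
        omega
      · have hnl : e ⟨k + 1, hk⟩ * s (k + 1) ≤ e ⟨k, by omega⟩ * s (k + 2) :=
          le_of_not_gt (fun hlt => hA ((hascstep k hk).mpr hlt))
        have hek : 0 < e ⟨k, by omega⟩ := by
          have h1 : 0 < e ⟨k + 1, hk⟩ * s (k + 1) := Nat.mul_pos hpos (hspos k)
          have h2 : 0 < e ⟨k, by omega⟩ * s (k + 2) := lt_of_lt_of_le h1 hnl
          rcases Nat.eq_zero_or_pos (e ⟨k, by omega⟩) with h0 | h0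
          · rw [h0, zero_mul] at h2
            exact absurd h2 (lt_irrefl 0)
          · exact h0
        have := ih (by omega) hek
        rw [hCstep k hk]
        omega
  -- rewrite the target binomial coefficient
  have hasc_eq : asc s e = a' := by rw [asc_eq s hs e, ha']
  rw [hasc_eq]
  have hchoose : Nat.choose (t + 1 - a' + n - 1) n = Nat.choose (t + n - a') n := by
    rcases le_or_gt a' t with h | h
    · congr 1
      clear * - h
      omega
    · have h1 : t + 1 - a' + n - 1 < n := by clear * - h hn; omega
      have h2 : t + n - a' < n := by clear * - h ha'n; omega
      rw [Nat.choose_eq_zero_of_lt h1, Nat.choose_eq_zero_of_lt h2]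
  rw [← hchoose, ← Nat.multichoose_eq, ← card_dec n (t + 1 - a')]
  -- basic facts about elements of the c-side
  have hCmem : ∀ c : Fin n → ℕ, c ∈ (Fintype.piFinset fun _ : Fin n =>
      Finset.range (t + 1 - a')).filter
      (fun c : Fin n → ℕ =>
        ∀ i : Fin n, ∀ hi : (i : ℕ) + 1 < n, c ⟨(i : ℕ) + 1, hi⟩ ≤ c i) →
      (∀ i, c i + a' ≤ t) ∧
        (∀ i : Fin n, ∀ hi : (i : ℕ) + 1 < n, c ⟨(i : ℕ) + 1, hi⟩ ≤ c i) := by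
    intro c hc
    have h1 := Finset.mem_filter.mp hc
    refine ⟨fun i => ?_, h1.2⟩
    have := Finset.mem_range.mp (Fintype.mem_piFinset.mp h1.1 i)
    omega
  have hmu_le : ∀ c : Fin n → ℕ, (∀ i, c i + a' ≤ t) →
      ∀ i : Fin n, s ((i : ℕ) + 1) * (c i + B i) + e i ≤ t * s ((i : ℕ) + 1) := by
    intro c hc i
    have hCBi := hCB i
    have hci := hc i
    have hts : t * s ((i : ℕ) + 1) = s ((i : ℕ) + 1) * t := Nat.mul_comm _ _
    rcases Nat.eq_zero_or_pos (e i) with he0 | he0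
    · have h1 : c i + B i ≤ t := by omega
      have h2 := Nat.mul_le_mul_left (s ((i : ℕ) + 1)) h1
      omega
    · have hCpos : 1 ≤ C i := hF3 (i : ℕ) i.isLt he0
      have h1 : c i + B i + 1 ≤ t := by omega
      have h2 := Nat.mul_le_mul_left (s ((i : ℕ) + 1)) h1
      have h3 : s ((i : ℕ) + 1) * (c i + B i + 1)
          = s ((i : ℕ) + 1) * (c i + B i) + s ((i : ℕ) + 1) := by ring
      have h4 := he' i
      omega
  refine (Finset.card_bij (fun (c : Fin n → ℕ) (_ : c ∈ _) => fun i : Fin n =>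
      t * s ((i : ℕ) + 1) - (s ((i : ℕ) + 1) * (c i + B i) + e i)) ?_ ?_ ?_).symm
  · -- membership
    intro c hc
    obtain ⟨hc1, hc2⟩ := hCmem c hc
    refine Finset.mem_filter.mpr ⟨Finset.mem_filter.mpr ⟨?_, ?_⟩, ?_⟩
    · rw [Fintype.mem_piFinset]
      intro i
      rw [Finset.mem_range]
      show t * s ((i : ℕ) + 1) - (s ((i : ℕ) + 1) * (c i + B i) + e i)
        < t * s ((i : ℕ) + 1) + 1
      have := Nat.sub_le (t * s ((i : ℕ) + 1)) (s ((i : ℕ) + 1) * (c i + B i) + e i)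
      omega
    · intro i hi
      show (t * s ((i : ℕ) + 1) - (s ((i : ℕ) + 1) * (c i + B i) + e i)) * s ((i : ℕ) + 2)
        ≤ (t * s ((i : ℕ) + 2) - (s ((i : ℕ) + 2)
            * (c ⟨(i : ℕ) + 1, hi⟩ + B ⟨(i : ℕ) + 1, hi⟩) + e ⟨(i : ℕ) + 1, hi⟩))
          * s ((i : ℕ) + 1)
      have hu : s ((i : ℕ) + 1) * (c i + B i) + e i ≤ t * s ((i : ℕ) + 1) := hmu_le c hc1 i
      have hv : s ((i : ℕ) + 2) * (c ⟨(i : ℕ) + 1, hi⟩ + B ⟨(i : ℕ) + 1, hi⟩)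
          + e ⟨(i : ℕ) + 1, hi⟩ ≤ t * s ((i : ℕ) + 2) := hmu_le c hc1 ⟨(i : ℕ) + 1, hi⟩
      have hkey : (s ((i : ℕ) + 2) * (c ⟨(i : ℕ) + 1, hi⟩ + B ⟨(i : ℕ) + 1, hi⟩)
            + e ⟨(i : ℕ) + 1, hi⟩) * s ((i : ℕ) + 1)
          ≤ (s ((i : ℕ) + 1) * (c i + B i) + e i) * s ((i : ℕ) + 2) := by
        have hex1 : (s ((i : ℕ) + 1) * (c i + B i) + e i) * s ((i : ℕ) + 2)
            = s ((i : ℕ) + 1) * s ((i : ℕ) + 2) * (c i + B i)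
              + e i * s ((i : ℕ) + 2) := by ring
        have hex2 : (s ((i : ℕ) + 2) * (c ⟨(i : ℕ) + 1, hi⟩ + B ⟨(i : ℕ) + 1, hi⟩)
              + e ⟨(i : ℕ) + 1, hi⟩) * s ((i : ℕ) + 1)
            = s ((i : ℕ) + 1) * s ((i : ℕ) + 2)
                * (c ⟨(i : ℕ) + 1, hi⟩ + B ⟨(i : ℕ) + 1, hi⟩)
              + e ⟨(i : ℕ) + 1, hi⟩ * s ((i : ℕ) + 1) := by ring
        have hBi : B i = B ⟨(i : ℕ) + 1, hi⟩
            + (if ascP s e ⟨(i : ℕ) + 1, hi⟩ then 1 else 0) := hBstep (i : ℕ) hi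
        have hcd : c ⟨(i : ℕ) + 1, hi⟩ ≤ c i := hc2 i hi
        by_cases hA : ascP s e ⟨(i : ℕ) + 1, hi⟩
        · rw [if_pos hA] at hBi
          have hm : c ⟨(i : ℕ) + 1, hi⟩ + B ⟨(i : ℕ) + 1, hi⟩ + 1 ≤ c i + B i := by omega
          have h8 := Nat.mul_le_mul_left (s ((i : ℕ) + 1) * s ((i : ℕ) + 2)) hm
          have hmul : s ((i : ℕ) + 1) * s ((i : ℕ) + 2)
                * (c ⟨(i : ℕ) + 1, hi⟩ + B ⟨(i : ℕ) + 1, hi⟩ + 1)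
              = s ((i : ℕ) + 1) * s ((i : ℕ) + 2)
                  * (c ⟨(i : ℕ) + 1, hi⟩ + B ⟨(i : ℕ) + 1, hi⟩)
                + s ((i : ℕ) + 1) * s ((i : ℕ) + 2) := by ring
          have hel : e ⟨(i : ℕ) + 1, hi⟩ * s ((i : ℕ) + 1)
              ≤ s ((i : ℕ) + 2) * s ((i : ℕ) + 1) :=
            Nat.mul_le_mul_right _ (le_of_lt (he' ⟨(i : ℕ) + 1, hi⟩))
          have hsl : s ((i : ℕ) + 2) * s ((i : ℕ) + 1)
              = s ((i : ℕ) + 1) * s ((i : ℕ) + 2) := by ring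
          omega
        · rw [if_neg hA] at hBi
          have hge : e ⟨(i : ℕ) + 1, hi⟩ * s ((i : ℕ) + 1)
              ≤ e i * s ((i : ℕ) + 2) :=
            le_of_not_gt (fun hlt => hA ((hascstep (i : ℕ) hi).mpr hlt))
          have hm : c ⟨(i : ℕ) + 1, hi⟩ + B ⟨(i : ℕ) + 1, hi⟩ ≤ c i + B i := by omega
          have h8 := Nat.mul_le_mul_left (s ((i : ℕ) + 1) * s ((i : ℕ) + 2)) hm
          omega
      rw [Nat.sub_mul, Nat.sub_mul]
      have q1 : (s ((i : ℕ) + 1) * (c i + B i) + e i) * s ((i : ℕ) + 2)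
          ≤ t * s ((i : ℕ) + 1) * s ((i : ℕ) + 2) := Nat.mul_le_mul_right _ hu
      have q2 : (s ((i : ℕ) + 2) * (c ⟨(i : ℕ) + 1, hi⟩ + B ⟨(i : ℕ) + 1, hi⟩)
            + e ⟨(i : ℕ) + 1, hi⟩) * s ((i : ℕ) + 1)
          ≤ t * s ((i : ℕ) + 2) * s ((i : ℕ) + 1) := Nat.mul_le_mul_right _ hv
      have q3 : t * s ((i : ℕ) + 1) * s ((i : ℕ) + 2)
          = t * s ((i : ℕ) + 2) * s ((i : ℕ) + 1) := by ring
      omega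
    · funext i
      show (t * s ((i : ℕ) + 1)
          - (t * s ((i : ℕ) + 1) - (s ((i : ℕ) + 1) * (c i + B i) + e i)))
          % s ((i : ℕ) + 1) = e i
      have hu : s ((i : ℕ) + 1) * (c i + B i) + e i ≤ t * s ((i : ℕ) + 1) := hmu_le c hc1 i
      rw [Nat.sub_sub_self hu, Nat.mul_add_mod, Nat.mod_eq_of_lt (he' i)]
  · -- injectivity
    intro c1 hc1 c2 hc2 heq
    funext i
    have h1 : t * s ((i : ℕ) + 1) - (s ((i : ℕ) + 1) * (c1 i + B i) + e i)
        = t * s ((i : ℕ) + 1) - (s ((i : ℕ) + 1) * (c2 i + B i) + e i) :=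
      congrFun heq i
    clear heq
    have hu1 : s ((i : ℕ) + 1) * (c1 i + B i) + e i ≤ t * s ((i : ℕ) + 1) :=
      hmu_le c1 (hCmem c1 hc1).1 i
    have hu2 : s ((i : ℕ) + 1) * (c2 i + B i) + e i ≤ t * s ((i : ℕ) + 1) :=
      hmu_le c2 (hCmem c2 hc2).1 i
    have h2 : s ((i : ℕ) + 1) * (c1 i + B i) = s ((i : ℕ) + 1) * (c2 i + B i) := by
      omega
    have := Nat.eq_of_mul_eq_mul_left (hspos (i : ℕ)) h2
    omega
  · -- surjectivity
    intro lam hlam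
    have hm1 := Finset.mem_filter.mp hlam
    have hE : E lam = e := hm1.2
    have hm2 := Finset.mem_filter.mp hm1.1
    have hbox : ∀ i : Fin n, lam i ≤ t * s ((i : ℕ) + 1) := by
      intro i
      have := Finset.mem_range.mp (Fintype.mem_piFinset.mp hm2.1 i)
      omega
    have hchain := hm2.2
    set d : Fin n → ℕ := fun i => (t * s ((i : ℕ) + 1) - lam i) / s ((i : ℕ) + 1)
      with hddef
    have hmod : ∀ i : Fin n, (t * s ((i : ℕ) + 1) - lam i) % s ((i : ℕ) + 1) = e i :=
      fun i => congrFun hE i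
    have hmu : ∀ i : Fin n,
        t * s ((i : ℕ) + 1) - lam i = s ((i : ℕ) + 1) * d i + e i := by
      intro i
      rw [← hmod i]
      exact (Nat.div_add_mod _ _).symm
    have hstep : ∀ (k : ℕ) (hk : k + 1 < n),
        d ⟨k + 1, hk⟩ + (if ascP s e ⟨k + 1, hk⟩ then 1 else 0)
          ≤ d ⟨k, by omega⟩ := by
      intro k hk
      have hk0 : k < n := by omega
      have hcc : lam ⟨k, hk0⟩ * s (k + 2) ≤ lam ⟨k + 1, hk⟩ * s (k + 1) :=
        hchain ⟨k, hk0⟩ hk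
      have e1 : t * s (k + 1) - lam ⟨k, hk0⟩
          = s (k + 1) * d ⟨k, hk0⟩ + e ⟨k, hk0⟩ := hmu ⟨k, hk0⟩
      have e2 : t * s (k + 2) - lam ⟨k + 1, hk⟩
          = s (k + 2) * d ⟨k + 1, hk⟩ + e ⟨k + 1, hk⟩ := hmu ⟨k + 1, hk⟩
      have b1 : lam ⟨k, hk0⟩ ≤ t * s (k + 1) := hbox ⟨k, hk0⟩
      have b2 : lam ⟨k + 1, hk⟩ ≤ t * s (k + 2) := hbox ⟨k + 1, hk⟩
      have hL1 : lam ⟨k, hk0⟩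
          = t * s (k + 1) - (s (k + 1) * d ⟨k, hk0⟩ + e ⟨k, hk0⟩) := by omega
      have hL2 : lam ⟨k + 1, hk⟩
          = t * s (k + 2) - (s (k + 2) * d ⟨k + 1, hk⟩ + e ⟨k + 1, hk⟩) := by omega
      rw [hL1, hL2, Nat.sub_mul, Nat.sub_mul] at hcc
      have q1 : (s (k + 1) * d ⟨k, hk0⟩ + e ⟨k, hk0⟩) * s (k + 2)
          ≤ t * s (k + 1) * s (k + 2) := Nat.mul_le_mul_right _ (by omega)
      have q2 : (s (k + 2) * d ⟨k + 1, hk⟩ + e ⟨k + 1, hk⟩) * s (k + 1)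
          ≤ t * s (k + 2) * s (k + 1) := Nat.mul_le_mul_right _ (by omega)
      have q3 : t * s (k + 1) * s (k + 2) = t * s (k + 2) * s (k + 1) := by ring
      have hkey : (s (k + 2) * d ⟨k + 1, hk⟩ + e ⟨k + 1, hk⟩) * s (k + 1)
          ≤ (s (k + 1) * d ⟨k, hk0⟩ + e ⟨k, hk0⟩) * s (k + 2) := by omega
      have hex1 : (s (k + 1) * d ⟨k, hk0⟩ + e ⟨k, hk0⟩) * s (k + 2)
          = s (k + 1) * s (k + 2) * d ⟨k, hk0⟩ + e ⟨k, hk0⟩ * s (k + 2) := by ring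
      have hex2 : (s (k + 2) * d ⟨k + 1, hk⟩ + e ⟨k + 1, hk⟩) * s (k + 1)
          = s (k + 1) * s (k + 2) * d ⟨k + 1, hk⟩
            + e ⟨k + 1, hk⟩ * s (k + 1) := by ring
      by_cases hA : ascP s e ⟨k + 1, hk⟩
      · rw [if_pos hA]
        have hlt : e ⟨k, hk0⟩ * s (k + 2) < e ⟨k + 1, hk⟩ * s (k + 1) :=
          (hascstep k hk).mp hA
        have hdd : s (k + 1) * s (k + 2) * d ⟨k + 1, hk⟩
            < s (k + 1) * s (k + 2) * d ⟨k, hk0⟩ := by omega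
        have := lt_of_mul_lt_mul_left hdd (Nat.zero_le _)
        omega
      · rw [if_neg hA]
        have hge : e ⟨k + 1, hk⟩ * s (k + 1) ≤ e ⟨k, hk0⟩ * s (k + 2) :=
          le_of_not_gt (fun hlt => hA ((hascstep k hk).mpr hlt))
        have hek : e ⟨k, hk0⟩ < s (k + 1) := he' ⟨k, hk0⟩
        have hes : e ⟨k, hk0⟩ * s (k + 2) < s (k + 1) * s (k + 2) :=
          mul_lt_mul_of_pos_right hek (hspos (k + 1))
        have hexpand : s (k + 1) * s (k + 2) * (d ⟨k, hk0⟩ + 1)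
            = s (k + 1) * s (k + 2) * d ⟨k, hk0⟩ + s (k + 1) * s (k + 2) := by ring
        have hdd : s (k + 1) * s (k + 2) * d ⟨k + 1, hk⟩
            < s (k + 1) * s (k + 2) * (d ⟨k, hk0⟩ + 1) := by omega
        have := lt_of_mul_lt_mul_left hdd (Nat.zero_le _)
        omega
    have hd0 : ∀ h0 : 0 < n, d ⟨0, h0⟩ + C ⟨0, h0⟩ ≤ t := by
      intro h0
      have e1 : t * s 1 - lam ⟨0, h0⟩ = s 1 * d ⟨0, h0⟩ + e ⟨0, h0⟩ := hmu ⟨0, h0⟩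
      have b1 : lam ⟨0, h0⟩ ≤ t * s 1 := hbox ⟨0, h0⟩
      rw [hC0 h0]
      have hts : t * s 1 = s 1 * t := by ring
      by_cases hA : ascP s e ⟨0, h0⟩
      · rw [if_pos hA]
        have hepos : 0 < e ⟨0, h0⟩ := (hasc0 h0).mp hA
        have hlt : s 1 * d ⟨0, h0⟩ < s 1 * t := by omega
        have := lt_of_mul_lt_mul_left hlt (Nat.zero_le _)
        omega
      · rw [if_neg hA]
        have hle : s 1 * d ⟨0, h0⟩ ≤ s 1 * t := by omega
        have := Nat.le_of_mul_le_mul_left hle (hspos 0)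
        omega
    have hdC : ∀ (k : ℕ) (hk : k < n), d ⟨k, hk⟩ + C ⟨k, hk⟩ ≤ t := by
      intro k
      induction k with
      | zero => intro hk; exact hd0 hk
      | succ k ih =>
        intro hk
        have h1 := ih (by omega)
        have h2 : d ⟨k + 1, hk⟩ + (if ascP s e ⟨k + 1, hk⟩ then 1 else 0)
            ≤ d ⟨k, by omega⟩ := hstep k hk
        have h3 := hCstep k hk
        omega
    have hBd : ∀ (k : ℕ) (hk : k < n), B ⟨k, hk⟩ ≤ d ⟨k, hk⟩ := by
      have aux : ∀ (j : ℕ) (k : ℕ) (hk : k < n), n - 1 - k = j →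
          B ⟨k, hk⟩ ≤ d ⟨k, hk⟩ := by
        intro j
        induction j with
        | zero =>
          intro k hk hj
          have hk1 : k = n - 1 := by omega
          subst hk1
          rw [hB0 hk]
          exact Nat.zero_le _
        | succ j ih =>
          intro k hk hj
          have hk1 : k + 1 < n := by omega
          have h1 := ih (k + 1) hk1 (by omega)
          have h2 : B ⟨k, hk⟩ = B ⟨k + 1, hk1⟩
              + (if ascP s e ⟨k + 1, hk1⟩ then 1 else 0) := hBstep k hk1
          have h3 : d ⟨k + 1, hk1⟩ + (if ascP s e ⟨k + 1, hk1⟩ then 1 else 0)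
              ≤ d ⟨k, hk⟩ := hstep k hk1
          omega
      intro k hk
      exact aux (n - 1 - k) k hk rfl
    refine ⟨fun i => d i - B i, ?_, ?_⟩
    · refine Finset.mem_filter.mpr ⟨?_, ?_⟩
      · rw [Fintype.mem_piFinset]
        intro i
        rw [Finset.mem_range]
        have hdCi : d i + C i ≤ t := hdC (i : ℕ) i.isLt
        have hBdi : B i ≤ d i := hBd (i : ℕ) i.isLt
        have hCBi := hCB i
        show d i - B i < t + 1 - a'
        omega
      · intro i hi
        show d ⟨(i : ℕ) + 1, hi⟩ - B ⟨(i : ℕ) + 1, hi⟩ ≤ d i - B i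
        have h2 : B i = B ⟨(i : ℕ) + 1, hi⟩
            + (if ascP s e ⟨(i : ℕ) + 1, hi⟩ then 1 else 0) := hBstep (i : ℕ) hi
        have h3 : d ⟨(i : ℕ) + 1, hi⟩ + (if ascP s e ⟨(i : ℕ) + 1, hi⟩ then 1 else 0)
            ≤ d i := hstep (i : ℕ) hi
        have h4 : B i ≤ d i := hBd (i : ℕ) i.isLt
        have h5 : B ⟨(i : ℕ) + 1, hi⟩ ≤ d ⟨(i : ℕ) + 1, hi⟩ := hBd ((i : ℕ) + 1) hi
        omega
    · funext i
      show t * s ((i : ℕ) + 1)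
          - (s ((i : ℕ) + 1) * ((d i - B i) + B i) + e i) = lam i
      have hBdi : B i ≤ d i := hBd (i : ℕ) i.isLt
      rw [Nat.sub_add_cancel hBdi]
      have := hmu i
      have := hbox i
      omega

end Stmt18Aux

open Polynomial PowerSeries

theorem stmt18 (s : ℕ → ℕ) (hs : ∀ i, 1 ≤ i → 0 < s i) (n : ℕ) (hn : 1 ≤ n) :
    (PowerSeries.mk fun t => (lhall s n t : ℤ)) * (1 - PowerSeries.X) ^ (n + 1)
      = ∑ e ∈ invSeqs s n, (PowerSeries.X : PowerSeries ℤ) ^ asc s e := by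
  have hkey := Stmt18Aux.key s hs n hn
  have hasc_le : ∀ e : Fin n → ℕ, asc s e ≤ n := by
    intro e
    rw [Stmt18Aux.asc_eq s hs e]
    exact le_trans (Finset.card_filter_le _ _) (by simp)
  have h1 : (PowerSeries.mk fun t => (lhall s n t : ℤ))
      = ∑ e ∈ invSeqs s n,
          PowerSeries.mk (fun t => (Nat.choose (t + n - asc s e) n : ℤ)) := by
    ext t
    rw [map_sum]
    simp only [coeff_mk]
    rw [hkey t]
    push_cast
    rfl
  rw [h1, Finset.sum_mul]
  apply Finset.sum_congr rfl
  intro e _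
  set a := asc s e with ha_def
  have ha : a ≤ n := hasc_le e
  have h2 : (PowerSeries.mk fun t => (Nat.choose (t + n - a) n : ℤ))
      = (PowerSeries.mk fun t => (Nat.choose (n + t) n : ℤ)) * PowerSeries.X ^ a := by
    ext t
    rw [PowerSeries.coeff_mul_X_pow', coeff_mk]
    split_ifs with h
    · rw [coeff_mk]
      congr 2
      omega
    · have hlt : t + n - a < n := by omega
      rw [Nat.choose_eq_zero_of_lt hlt]
      simp
  rw [h2, mul_right_comm, PowerSeries.mk_add_choose_mul_one_sub_pow_eq_one, one_mul]
end

section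
/- For n ≥ 1, the ascent-number generating functions over I_{2n} and I'_{2n} coincide: ∑_{e∈I_{2n}} x^{asc(e)} = ∑_{e∈I'_{2n}} x^{asc(e)}, where I_{2n} uses s = (1,4,3,8,5,12,…) and I'_{2n} uses s = (2,2,6,4,10,6,…). -/
open Finset

section Aux
open Polynomial

-- === auxiliary development ===

lemma sum_piFinset_cons {β : Type*} [AddCommMonoid β] {m : ℕ}
    (t : Fin (m+1) → Finset ℕ) (f : (Fin (m+1) → ℕ) → β) :
    ∑ e ∈ Fintype.piFinset t, f e
      = ∑ a ∈ t 0, ∑ e ∈ Fintype.piFinset (fun i : Fin m => t i.succ), f (Fin.cons a e) := by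
  rw [← Finset.sum_product']
  refine Finset.sum_nbij' (fun e => (e 0, fun i => e i.succ)) (fun p => Fin.cons p.1 p.2) ?_ ?_ ?_ ?_ ?_
  · intro e he
    simp only [Fintype.mem_piFinset] at he
    simp only [Finset.mem_product, Fintype.mem_piFinset]
    exact ⟨he 0, fun i => he i.succ⟩
  · intro p hp
    simp only [Finset.mem_product, Fintype.mem_piFinset] at hp
    simp only [Fintype.mem_piFinset]
    intro i
    refine Fin.cases ?_ ?_ i
    · simpa using hp.1
    · intro j; simpa using hp.2 j
  · intro e he
    exact Fin.cons_self_tail e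
  · intro p hp
    simp
  · intro e he
    exact congrArg f (Fin.cons_self_tail e).symm


def ascV (v d : ℕ) {m : ℕ} (s : ℕ → ℕ) (e : Fin m → ℕ) : ℕ :=
  (Finset.univ.filter fun i : Fin m =>
    (if (i : ℕ) = 0 then (v : ℚ)/(d : ℚ)
     else (e ⟨(i : ℕ) - 1, Nat.lt_of_le_of_lt (Nat.sub_le _ _) i.isLt⟩ : ℚ) / s (i : ℕ))
      < (e i : ℚ) / s ((i : ℕ) + 1)).card

lemma cons_mk {m : ℕ} (a : ℕ) (e : Fin m → ℕ) (i : ℕ) (h : i < m+1) :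
    (Fin.cons a e : Fin (m+1) → ℕ) ⟨i, h⟩
      = if hi : i = 0 then a else e ⟨i-1, by omega⟩ := by
  cases i with
  | zero =>
    have h0 : (⟨0, h⟩ : Fin (m+1)) = 0 := rfl
    rw [h0, Fin.cons_zero]
    rfl
  | succ j =>
    have h3 : (⟨j+1, h⟩ : Fin (m+1)) = Fin.succ ⟨j, Nat.succ_lt_succ_iff.mp h⟩ := rfl
    rw [h3, Fin.cons_succ]
    simp

lemma ascV_cons (m v d a : ℕ) (s : ℕ → ℕ) (e : Fin m → ℕ) :
    ascV v d s (Fin.cons a e)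
      = (if (v:ℚ)/(d:ℚ) < (a:ℚ)/(s 1 : ℚ) then 1 else 0)
        + ascV a (s 1) (fun r => s (r+1)) e := by
  unfold ascV
  rw [Finset.card_filter, Finset.card_filter, Fin.sum_univ_succ]
  congr 1
  apply congrArg
  funext x
  rcases x with ⟨i, hi⟩
  simp only [cons_mk]
  cases i with
  | zero => simp [cons_mk]
  | succ j => simp [cons_mk]

lemma seg (N : ℕ) (P : ℕ → Prop) [DecidablePred P]
    (mono : ∀ x y, x ≤ y → P x → P y) (a : ℕ) (ha : a < N) :
    P a ↔ N ≤ a + ((Finset.range N).filter P).card := by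
  constructor
  · intro hPa
    have hsub : Finset.Ico a N ⊆ (Finset.range N).filter P := by
      intro y hy
      simp only [Finset.mem_Ico] at hy
      simp only [Finset.mem_filter, Finset.mem_range]
      exact ⟨hy.2, mono a y hy.1 hPa⟩
    have := Finset.card_le_card hsub
    rw [Nat.card_Ico] at this
    omega
  · intro hcard
    by_contra hPa
    have hsub : (Finset.range N).filter P ⊆ Finset.Ico (a+1) N := by
      intro y hy
      simp only [Finset.mem_filter, Finset.mem_range] at hy
      simp only [Finset.mem_Ico]
      refine ⟨?_, hy.1⟩
      by_contra hya
      exact hPa (mono y a (by omega) hy.2)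
    have := Finset.card_le_card hsub
    rw [Nat.card_Ico] at this
    omega



noncomputable def Qpoly (n s o : ℕ) : Polynomial ℤ :=
  (n : Polynomial ℤ) + (X - 1) * (s : Polynomial ℤ) + (X - 1)^2 * (o : Polynomial ℤ)

lemma Qpoly_add (n1 s1 o1 n2 s2 o2 : ℕ) :
    Qpoly n1 s1 o1 + Qpoly n2 s2 o2 = Qpoly (n1+n2) (s1+s2) (o1+o2) := by
  unfold Qpoly; push_cast; ring

lemma Qpoly_two (n s o : ℕ) : 2 * Qpoly n s o = Qpoly (2*n) (2*s) (2*o) := by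
  unfold Qpoly; push_cast; ring

lemma Qpoly_congr {n s o n' s' o' : ℕ} (h1 : n = n') (h2 : s = s') (h3 : o = o') :
    Qpoly n s o = Qpoly n' s' o' := by subst h1 h2 h3; rfl

lemma pow_ite_ite (p q : Prop) [Decidable p] [Decidable q] :
    (X : Polynomial ℤ)^((if p then 1 else 0) + (if q then 1 else 0))
      = 1 + (X - 1) * (if p then 1 else 0) + (X - 1) * (if q then 1 else 0)
        + (X - 1)^2 * ((if p then (1 : Polynomial ℤ) else 0) * (if q then 1 else 0)) := by
  by_cases hp : p <;> by_cases hq : q <;> simp [hp, hq] <;> ring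

lemma count_top (N k : ℕ) (hk : k ≤ N) :
    ((Finset.range N).filter (fun a => N ≤ a + k)).card = k := by
  have h : (Finset.range N).filter (fun a => N ≤ a + k) = Finset.Ico (N-k) N := by
    ext x; simp only [Finset.mem_filter, Finset.mem_range, Finset.mem_Ico]; omega
  rw [h, Nat.card_Ico]; omega

lemma count_bot (N c : ℕ) (hc : c ≤ N) :
    ((Finset.range N).filter (fun a => a < c)).card = c := by
  have h : (Finset.range N).filter (fun a => a < c) = Finset.range c := by
    ext x; simp only [Finset.mem_filter, Finset.mem_range]; omega
  rw [h, Finset.card_range]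

lemma count_both (N c k : ℕ) (hk : k ≤ N) (hc : c ≤ N) :
    ((Finset.range N).filter (fun a => (N ≤ a + k) ∧ a < c)).card = c + k - N := by
  have h : (Finset.range N).filter (fun a => (N ≤ a + k) ∧ a < c) = Finset.Ico (N-k) c := by
    ext x; simp only [Finset.mem_filter, Finset.mem_range, Finset.mem_Ico]; omega
  rw [h, Nat.card_Ico]; omega

lemma asum (N c k : ℕ) (hc : c ≤ N) (hk : k ≤ N) :
    ∑ a ∈ Finset.range N,
      (X : Polynomial ℤ)^((if N ≤ a + k then 1 else 0) + (if a < c then 1 else 0))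
      = Qpoly N (c+k) (c+k-N) := by
  have expand : ∀ a ∈ Finset.range N,
      (X : Polynomial ℤ)^((if N ≤ a + k then 1 else 0) + (if a < c then 1 else 0))
      = 1 + (X - 1) * (if N ≤ a + k then 1 else 0) + (X - 1) * (if a < c then 1 else 0)
        + (X - 1)^2 * (if (N ≤ a + k) ∧ a < c then (1 : Polynomial ℤ) else 0) := by
    intro a _
    rw [pow_ite_ite]
    congr 1
    by_cases h1 : N ≤ a + k <;> by_cases h2 : a < c <;> simp [h1, h2]
  rw [Finset.sum_congr rfl expand]
  simp only [Finset.sum_add_distrib, Finset.sum_const, Finset.card_range, ← Finset.mul_sum,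
    Finset.sum_boole]
  rw [count_top N k hk, count_bot N c hc, count_both N c k hk hc]
  unfold Qpoly
  push_cast
  ring

def cntA (l v d : ℕ) : ℕ := ((Finset.range (2*l+1)).filter fun x => v*(2*l+1) < x*d).card
def cntB (l v d : ℕ) : ℕ := ((Finset.range (4*l+2)).filter fun x => v*(4*l+2) < x*d).card
def knA (l b : ℕ) : ℕ := cntA (l+1) b (4*l+4)
def knB (l b : ℕ) : ℕ := cntB (l+1) b (2*l+2)

-- generic: a*W < T ↔ a < c, given sandwich facts
lemma key_iff (W T c a : ℕ) (h2 : T ≤ c*W) (h1 : 0 < c → (c-1)*W < T) :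
    (a*W < T ↔ a < c) := by
  constructor
  · intro h
    by_contra hac
    push_neg at hac
    have : c*W ≤ a*W := Nat.mul_le_mul_right W hac
    omega
  · intro h
    have h1' := h1 (by omega)
    have : a*W ≤ (c-1)*W := Nat.mul_le_mul_right W (by omega)
    omega

-- counting: #{x < N : T < x*W} = N - c  when  T < c*W and (0 < c → (c-1)*W ≤ T)
lemma countGT (N T W c : ℕ) (hkc : c ≤ N) (h2 : c*W ≤ T) (h1 : T < (c+1)*W) :
    ((Finset.range N).filter (fun x => T < x*W)).card = N - (c+1) := by
  have hiff : ∀ x, (T < x*W ↔ c+1 ≤ x) := by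
    intro x
    constructor
    · intro h
      by_contra hx
      push_neg at hx
      have : x*W ≤ c*W := Nat.mul_le_mul_right W (by omega)
      omega
    · intro h
      have : (c+1)*W ≤ x*W := Nat.mul_le_mul_right W h
      omega
  have h : (Finset.range N).filter (fun x => T < x*W) = Finset.Ico (c+1) N := by
    ext x
    simp only [Finset.mem_filter, Finset.mem_range, Finset.mem_Ico, hiff]
    omega
  rw [h, Nat.card_Ico]

lemma knA_even (l u : ℕ) (hu : u ≤ 2*l+1) : knA l (2*u) = 2*l+2-u := by
  unfold knA cntA
  rw [countGT (2*(l+1)+1) (2*u*(2*(l+1)+1)) (4*l+4) u (by omega)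
    (by nlinarith) (by nlinarith)]
  omega

lemma knA_odd_low (l u : ℕ) (hu : u ≤ l) : knA l (2*u+1) = 2*l+2-u := by
  unfold knA cntA
  rw [countGT (2*(l+1)+1) ((2*u+1)*(2*(l+1)+1)) (4*l+4) u (by omega)
    (by nlinarith) (by nlinarith)]
  omega

lemma knA_odd_high (l u : ℕ) (hu : l+1 ≤ u) (hu2 : u ≤ 2*l+1) : knA l (2*u+1) = 2*l+1-u := by
  unfold knA cntA
  rw [countGT (2*(l+1)+1) ((2*u+1)*(2*(l+1)+1)) (4*l+4) (u+1) (by omega)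
    (by nlinarith) (by nlinarith)]
  omega

lemma knB_low (l u : ℕ) (hu : u ≤ l) : knB l u = 2*(2*l+2-u)+1 := by
  unfold knB cntB
  rw [countGT (4*(l+1)+2) (u*(4*(l+1)+2)) (2*l+2) (2*u) (by omega)
    (by nlinarith) (by nlinarith)]
  omega

lemma knB_high (l u : ℕ) (hu : l+1 ≤ u) (hu2 : u ≤ 2*l+1) : knB l u = 2*(2*l+2-u) := by
  unfold knB cntB
  rw [countGT (4*(l+1)+2) (u*(4*(l+1)+2)) (2*l+2) (2*u+1) (by omega)
    (by nlinarith) (by nlinarith)]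
  omega

def wA (l k a b : ℕ) : ℕ :=
  (if 2*l+1 ≤ a + k then 1 else 0) + (if a*(4*l+4) < b*(2*l+1) then 1 else 0)
def wB (l k a b : ℕ) : ℕ :=
  (if 4*l+2 ≤ a + k then 1 else 0) + (if a*(2*l+2) < b*(4*l+2) then 1 else 0)

noncomputable def TA (l k b : ℕ) : Polynomial ℤ :=
  ∑ a ∈ Finset.range (2*l+1), (X : Polynomial ℤ)^(wA l k a b)
noncomputable def TB (l k b : ℕ) : Polynomial ℤ :=
  ∑ a ∈ Finset.range (4*l+2), (X : Polynomial ℤ)^(wB l k a b)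

noncomputable def GA : ℕ → ℕ → ℕ → Polynomial ℤ
  | 0, _, _ => 1
  | (j+1), l, k => ∑ a ∈ Finset.range (2*l+1), ∑ b ∈ Finset.range (4*l+4),
      (Polynomial.X : Polynomial ℤ)^(wA l k a b) * GA j (l+1) (knA l b)

noncomputable def GB : ℕ → ℕ → ℕ → Polynomial ℤ
  | 0, _, _ => 1
  | (j+1), l, k => ∑ a ∈ Finset.range (4*l+2), ∑ b ∈ Finset.range (2*l+2),
      (Polynomial.X : Polynomial ℤ)^(wB l k a b) * GB j (l+1) (knB l b)

lemma GA_succ (j l k : ℕ) : GA (j+1) l k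
    = ∑ b ∈ Finset.range (4*l+4), TA l k b * GA j (l+1) (knA l b) := by
  rw [show GA (j+1) l k = ∑ a ∈ Finset.range (2*l+1), ∑ b ∈ Finset.range (4*l+4),
    (Polynomial.X : Polynomial ℤ)^(wA l k a b) * GA j (l+1) (knA l b) from rfl]
  rw [Finset.sum_comm]
  exact Finset.sum_congr rfl (fun b _ => (Finset.sum_mul _ _ _).symm)

lemma GB_succ (j l k : ℕ) : GB (j+1) l k
    = ∑ b ∈ Finset.range (2*l+2), TB l k b * GB j (l+1) (knB l b) := by
  rw [show GB (j+1) l k = ∑ a ∈ Finset.range (4*l+2), ∑ b ∈ Finset.range (2*l+2),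
    (Polynomial.X : Polynomial ℤ)^(wB l k a b) * GB j (l+1) (knB l b) from rfl]
  rw [Finset.sum_comm]
  exact Finset.sum_congr rfl (fun b _ => (Finset.sum_mul _ _ _).symm)

lemma TA_eval (l k c b : ℕ) (hc : c ≤ 2*l+1) (hk : k ≤ 2*l+1)
    (hiff : ∀ a, (a*(4*l+4) < b*(2*l+1) ↔ a < c)) :
    TA l k b = Qpoly (2*l+1) (c+k) (c+k-(2*l+1)) := by
  unfold TA wA
  rw [Finset.sum_congr rfl (fun a _ => by rw [if_congr (hiff a) (Iff.rfl.mpr rfl) rfl])]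
  exact asum (2*l+1) c k hc hk

lemma TB_eval (l k c b : ℕ) (hc : c ≤ 4*l+2) (hk : k ≤ 4*l+2)
    (hiff : ∀ a, (a*(2*l+2) < b*(4*l+2) ↔ a < c)) :
    TB l k b = Qpoly (4*l+2) (c+k) (c+k-(4*l+2)) := by
  unfold TB wB
  rw [Finset.sum_congr rfl (fun a _ => by rw [if_congr (hiff a) (Iff.rfl.mpr rfl) rfl])]
  exact asum (4*l+2) c k hc hk

lemma TA_even (l k u : ℕ) (hu : u ≤ 2*l+1) (hk : k ≤ 2*l+1) :
    TA l k (2*u) = Qpoly (2*l+1) (u+k) (u+k-(2*l+1)) := by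
  refine TA_eval l k u (2*u) (by omega) hk (fun a => key_iff _ _ _ _ (by nlinarith) ?_)
  intro hc
  cases u with
  | zero => omega
  | succ u' => simp only [Nat.add_sub_cancel]; nlinarith

lemma TA_odd_low (l k u : ℕ) (hu : u ≤ l) (hk : k ≤ 2*l+1) :
    TA l k (2*u+1) = Qpoly (2*l+1) (u+1+k) (u+1+k-(2*l+1)) := by
  refine TA_eval l k (u+1) (2*u+1) (by omega) hk (fun a => key_iff _ _ _ _ (by nlinarith) ?_)
  intro hc
  simp only [Nat.add_sub_cancel]
  nlinarith

lemma TA_odd_high (l k u : ℕ) (hu : l+1 ≤ u) (hu2 : u ≤ 2*l+1) (hk : k ≤ 2*l+1) :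
    TA l k (2*u+1) = Qpoly (2*l+1) (u+k) (u+k-(2*l+1)) := by
  refine TA_eval l k u (2*u+1) (by omega) hk (fun a => key_iff _ _ _ _ (by nlinarith) ?_)
  intro hc
  cases u with
  | zero => omega
  | succ u' => simp only [Nat.add_sub_cancel]; nlinarith

lemma TB_low (l k u : ℕ) (hu : u ≤ l) (hk : k ≤ 4*l+2) :
    TB l k u = Qpoly (4*l+2) (2*u+k) (2*u+k-(4*l+2)) := by
  refine TB_eval l k (2*u) u (by omega) hk (fun a => key_iff _ _ _ _ (by nlinarith) ?_)
  intro hc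
  cases u with
  | zero => omega
  | succ u' =>
    have h : 2*(u'+1)-1 = 2*u'+1 := by omega
    rw [h]
    nlinarith

lemma TB_high (l k u : ℕ) (hu : l+1 ≤ u) (hu2 : u ≤ 2*l+1) (hk : k ≤ 4*l+2) :
    TB l k u = Qpoly (4*l+2) (2*u-1+k) (2*u-1+k-(4*l+2)) := by
  refine TB_eval l k (2*u-1) u (by omega) hk (fun a => key_iff _ _ _ _ ?_ ?_)
  · have h : 2*u-1 = 2*(u-1)+1 := by omega
    rw [h]
    have h2 : u = (u-1)+1 := by omega
    nlinarith [Nat.sub_add_cancel (show 1 ≤ u by omega)]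
  · intro hc
    have h : 2*u-1-1 = 2*(u-1) := by omega
    rw [h]
    nlinarith [Nat.sub_add_cancel (show 1 ≤ u by omega)]

lemma sum_range_even_odd {β : Type*} [AddCommMonoid β] (M : ℕ) (f : ℕ → β) :
    ∑ b ∈ Finset.range (2*M), f b = ∑ u ∈ Finset.range M, (f (2*u) + f (2*u+1)) := by
  induction M with
  | zero => simp
  | succ M ih =>
    rw [show 2*(M+1) = 2*M+1+1 from rfl, Finset.sum_range_succ, Finset.sum_range_succ,
      Finset.sum_range_succ, ih]
    rw [add_assoc]

lemma range_split {β : Type*} [AddCommMonoid β] (l : ℕ) (f : ℕ → β) :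
    ∑ u ∈ Finset.range (2*l+2), f u
      = ∑ u ∈ Finset.range (l+1), f u + ∑ u ∈ Finset.Ico (l+1) (2*l+2), f u := by
  rw [Finset.range_eq_Ico, Finset.range_eq_Ico]
  exact (Finset.sum_Ico_consecutive f (m := 0) (n := l+1) (k := 2*l+2) (by omega) (by omega)).symm

lemma ico_pair {β : Type*} [AddCommMonoid β] (l : ℕ) (f g h1 h2 : ℕ → β)
    (hf : f (l+1) = h1 (l+1)) (hlast : g (2*l+1) = h2 (2*l+1))
    (hmid : ∀ u, l+1 ≤ u → u ≤ 2*l → f (u+1) + g u = h1 (u+1) + h2 u) :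
    ∑ u ∈ Finset.Ico (l+1) (2*l+2), (f u + g u)
      = ∑ u ∈ Finset.Ico (l+1) (2*l+2), (h1 u + h2 u) := by
  have key : ∀ (f g : ℕ → β), ∑ u ∈ Finset.Ico (l+1) (2*l+2), (f u + g u)
      = f (l+1) + (∑ u ∈ Finset.Ico (l+1) (2*l+1), (f (u+1) + g u)) + g (2*l+1) := by
    intro f g
    rw [Finset.sum_add_distrib]
    rw [Finset.sum_eq_sum_Ico_succ_bot (by omega) f]
    rw [show (2*l+2) = (2*l+1)+1 from rfl, Finset.sum_Ico_succ_top (by omega) g]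
    have hre : ∑ u ∈ Finset.Ico (l+1+1) (2*l+1+1), f u
        = ∑ u ∈ Finset.Ico (l+1) (2*l+1), f (u+1) := by
      rw [Finset.sum_Ico_eq_sum_range, Finset.sum_Ico_eq_sum_range]
      apply Finset.sum_congr (by congr 1; omega)
      intro i _
      congr 1
      omega
    rw [hre, Finset.sum_add_distrib]
    abel
  rw [key f g, key h1 h2, hf, hlast]
  congr 2
  apply Finset.sum_congr rfl
  intro u hu
  rw [Finset.mem_Ico] at hu
  exact hmid u hu.1 (by omega)

theorem core_ind (j : ℕ) :
    (∀ l k, k ≤ 2*l → 2 * GA j l k = 2 * GB j l (2*k+1))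
    ∧ (∀ l k, 1 ≤ k → k ≤ l → 2 * GB j l (2*k) = GA j l (k-1) + GA j l k) := by
  induction j with
  | zero =>
    constructor
    · intro l k _
      rw [show GA 0 l k = 1 from rfl, show GB 0 l (2*k+1) = 1 from rfl]
    · intro l k _ _
      rw [show GB 0 l (2*k) = 1 from rfl, show GA 0 l (k-1) = 1 from rfl,
        show GA 0 l k = 1 from rfl]
      norm_num
  | succ j ih =>
    obtain ⟨IH1, IH2⟩ := ih
    constructor
    · -- R1
      intro l k hk
      rw [GA_succ, GB_succ, Finset.mul_sum, Finset.mul_sum]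
      rw [show 4*l+4 = 2*(2*l+2) from by ring]
      rw [sum_range_even_odd (2*l+2) (fun b => 2*(TA l k b * GA j (l+1) (knA l b)))]
      rw [range_split l (fun u => 2*(TA l k (2*u) * GA j (l+1) (knA l (2*u)))
            + 2*(TA l k (2*u+1) * GA j (l+1) (knA l (2*u+1))))]
      rw [range_split l (fun b => 2*(TB l (2*k+1) b * GB j (l+1) (knB l b)))]
      congr 1
      · -- region 1
        apply Finset.sum_congr rfl
        intro u hu
        rw [Finset.mem_range] at hu
        rw [knA_even l u (by omega), knA_odd_low l u (by omega), knB_low l u (by omega)]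
        rw [show (2:Polynomial ℤ)*(TB l (2*k+1) u * GB j (l+1) (2*(2*l+2-u)+1))
          = TB l (2*k+1) u * (2 * GB j (l+1) (2*(2*l+2-u)+1)) from by ring]
        rw [← IH1 (l+1) (2*l+2-u) (by omega)]
        rw [TA_even l k u (by omega) (by omega), TA_odd_low l k u (by omega) (by omega),
          TB_low l (2*k+1) u (by omega) (by omega)]
        have hq : Qpoly (2*l+1) (u+k) (u+k-(2*l+1)) + Qpoly (2*l+1) (u+1+k) (u+1+k-(2*l+1))
            = Qpoly (4*l+2) (2*u+(2*k+1)) (2*u+(2*k+1)-(4*l+2)) := by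
          rw [Qpoly_add]; exact Qpoly_congr (by omega) (by omega) (by omega)
        linear_combination (2 * GA j (l+1) (2*l+2-u)) * hq
      · -- region 2
        have L2 : ∑ u ∈ Finset.Ico (l+1) (2*l+2),
            (2*(TA l k (2*u) * GA j (l+1) (knA l (2*u)))
              + 2*(TA l k (2*u+1) * GA j (l+1) (knA l (2*u+1))))
            = ∑ u ∈ Finset.Ico (l+1) (2*l+2),
            (2*(TA l k (2*u) * GA j (l+1) (2*l+2-u))
              + 2*(TA l k (2*u+1) * GA j (l+1) (2*l+1-u))) := by
          apply Finset.sum_congr rfl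
          intro u hu
          rw [Finset.mem_Ico] at hu
          rw [knA_even l u (by omega), knA_odd_high l u hu.1 (by omega)]
        have R2 : ∑ u ∈ Finset.Ico (l+1) (2*l+2), 2*(TB l (2*k+1) u * GB j (l+1) (knB l u))
            = ∑ u ∈ Finset.Ico (l+1) (2*l+2),
            (TB l (2*k+1) u * GA j (l+1) (2*l+2-u) + TB l (2*k+1) u * GA j (l+1) (2*l+1-u)) := by
          apply Finset.sum_congr rfl
          intro u hu
          rw [Finset.mem_Ico] at hu
          rw [knB_high l u hu.1 (by omega)]
          have h1 := IH2 (l+1) (2*l+2-u) (by omega) (by omega)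
          rw [show 2*l+2-u-1 = 2*l+1-u from by omega] at h1
          linear_combination (TB l (2*k+1) u) * h1
        rw [L2, R2]
        refine ico_pair l
          (fun u => 2*(TA l k (2*u) * GA j (l+1) (2*l+2-u)))
          (fun u => 2*(TA l k (2*u+1) * GA j (l+1) (2*l+1-u)))
          (fun u => TB l (2*k+1) u * GA j (l+1) (2*l+2-u))
          (fun u => TB l (2*k+1) u * GA j (l+1) (2*l+1-u)) ?_ ?_ ?_
        · show 2*(TA l k (2*(l+1)) * GA j (l+1) (2*l+2-(l+1)))
            = TB l (2*k+1) (l+1) * GA j (l+1) (2*l+2-(l+1))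
          rw [TA_even l k (l+1) (by omega) (by omega),
            TB_high l (2*k+1) (l+1) (by omega) (by omega) (by omega)]
          have hq : (2:Polynomial ℤ) * Qpoly (2*l+1) (l+1+k) (l+1+k-(2*l+1))
              = Qpoly (4*l+2) (2*(l+1)-1+(2*k+1)) (2*(l+1)-1+(2*k+1)-(4*l+2)) := by
            rw [Qpoly_two]; exact Qpoly_congr (by omega) (by omega) (by omega)
          linear_combination (GA j (l+1) (2*l+2-(l+1))) * hq
        · show 2*(TA l k (2*(2*l+1)+1) * GA j (l+1) (2*l+1-(2*l+1)))
            = TB l (2*k+1) (2*l+1) * GA j (l+1) (2*l+1-(2*l+1))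
          rw [TA_odd_high l k (2*l+1) (by omega) (by omega) (by omega),
            TB_high l (2*k+1) (2*l+1) (by omega) (by omega) (by omega)]
          have hq : (2:Polynomial ℤ) * Qpoly (2*l+1) (2*l+1+k) (2*l+1+k-(2*l+1))
              = Qpoly (4*l+2) (2*(2*l+1)-1+(2*k+1)) (2*(2*l+1)-1+(2*k+1)-(4*l+2)) := by
            rw [Qpoly_two]; exact Qpoly_congr (by omega) (by omega) (by omega)
          linear_combination (GA j (l+1) (2*l+1-(2*l+1))) * hq
        · intro u hu1 hu2
          show 2*(TA l k (2*(u+1)) * GA j (l+1) (2*l+2-(u+1)))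
              + 2*(TA l k (2*u+1) * GA j (l+1) (2*l+1-u))
            = TB l (2*k+1) (u+1) * GA j (l+1) (2*l+2-(u+1))
              + TB l (2*k+1) u * GA j (l+1) (2*l+1-u)
          rw [show 2*l+2-(u+1) = 2*l+1-u from by omega]
          rw [TA_even l k (u+1) (by omega) (by omega),
            TA_odd_high l k u (by omega) (by omega) (by omega),
            TB_high l (2*k+1) (u+1) (by omega) (by omega) (by omega),
            TB_high l (2*k+1) u (by omega) (by omega) (by omega)]
          have hq1 : (2:Polynomial ℤ) * Qpoly (2*l+1) (u+1+k) (u+1+k-(2*l+1))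
              = Qpoly (4*l+2) (2*(u+1)-1+(2*k+1)) (2*(u+1)-1+(2*k+1)-(4*l+2)) := by
            rw [Qpoly_two]; exact Qpoly_congr (by omega) (by omega) (by omega)
          have hq2 : (2:Polynomial ℤ) * Qpoly (2*l+1) (u+k) (u+k-(2*l+1))
              = Qpoly (4*l+2) (2*u-1+(2*k+1)) (2*u-1+(2*k+1)-(4*l+2)) := by
            rw [Qpoly_two]; exact Qpoly_congr (by omega) (by omega) (by omega)
          linear_combination (GA j (l+1) (2*l+1-u)) * hq1 + (GA j (l+1) (2*l+1-u)) * hq2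
    · -- R2
      intro l k hk1 hkl
      rw [GA_succ, GA_succ, GB_succ, Finset.mul_sum, ← Finset.sum_add_distrib]
      rw [show 4*l+4 = 2*(2*l+2) from by ring]
      rw [sum_range_even_odd (2*l+2) (fun b => TA l (k-1) b * GA j (l+1) (knA l b)
            + TA l k b * GA j (l+1) (knA l b))]
      rw [range_split l (fun u => (TA l (k-1) (2*u) * GA j (l+1) (knA l (2*u))
            + TA l k (2*u) * GA j (l+1) (knA l (2*u)))
            + (TA l (k-1) (2*u+1) * GA j (l+1) (knA l (2*u+1))
            + TA l k (2*u+1) * GA j (l+1) (knA l (2*u+1))))]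
      rw [range_split l (fun b => 2*(TB l (2*k) b * GB j (l+1) (knB l b)))]
      congr 1
      · -- region 1
        apply Finset.sum_congr rfl
        intro u hu
        rw [Finset.mem_range] at hu
        rw [knA_even l u (by omega), knA_odd_low l u (by omega), knB_low l u (by omega)]
        rw [show (2:Polynomial ℤ)*(TB l (2*k) u * GB j (l+1) (2*(2*l+2-u)+1))
          = TB l (2*k) u * (2 * GB j (l+1) (2*(2*l+2-u)+1)) from by ring]
        rw [← IH1 (l+1) (2*l+2-u) (by omega)]
        rw [TA_even l (k-1) u (by omega) (by omega), TA_odd_low l (k-1) u (by omega) (by omega),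
          TA_even l k u (by omega) (by omega), TA_odd_low l k u (by omega) (by omega),
          TB_low l (2*k) u (by omega) (by omega)]
        have hq : Qpoly (2*l+1) (u+(k-1)) (u+(k-1)-(2*l+1)) + Qpoly (2*l+1) (u+k) (u+k-(2*l+1))
            + (Qpoly (2*l+1) (u+1+(k-1)) (u+1+(k-1)-(2*l+1))
              + Qpoly (2*l+1) (u+1+k) (u+1+k-(2*l+1)))
            = 2 * Qpoly (4*l+2) (2*u+2*k) (2*u+2*k-(4*l+2)) := by
          rw [Qpoly_add, Qpoly_add, Qpoly_add, Qpoly_two]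
          exact Qpoly_congr (by omega) (by omega) (by omega)
        linear_combination (GA j (l+1) (2*l+2-u)) * hq.symm
      · -- region 2
        have L2 : ∑ u ∈ Finset.Ico (l+1) (2*l+2), 2*(TB l (2*k) u * GB j (l+1) (knB l u))
            = ∑ u ∈ Finset.Ico (l+1) (2*l+2),
            (TB l (2*k) u * GA j (l+1) (2*l+2-u) + TB l (2*k) u * GA j (l+1) (2*l+1-u)) := by
          apply Finset.sum_congr rfl
          intro u hu
          rw [Finset.mem_Ico] at hu
          rw [knB_high l u hu.1 (by omega)]
          have h1 := IH2 (l+1) (2*l+2-u) (by omega) (by omega)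
          rw [show 2*l+2-u-1 = 2*l+1-u from by omega] at h1
          linear_combination (TB l (2*k) u) * h1
        have R2 : ∑ u ∈ Finset.Ico (l+1) (2*l+2),
            ((TA l (k-1) (2*u) * GA j (l+1) (knA l (2*u))
              + TA l k (2*u) * GA j (l+1) (knA l (2*u)))
              + (TA l (k-1) (2*u+1) * GA j (l+1) (knA l (2*u+1))
              + TA l k (2*u+1) * GA j (l+1) (knA l (2*u+1))))
            = ∑ u ∈ Finset.Ico (l+1) (2*l+2),
            ((TA l (k-1) (2*u) + TA l k (2*u)) * GA j (l+1) (2*l+2-u)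
              + (TA l (k-1) (2*u+1) + TA l k (2*u+1)) * GA j (l+1) (2*l+1-u)) := by
          apply Finset.sum_congr rfl
          intro u hu
          rw [Finset.mem_Ico] at hu
          rw [knA_even l u (by omega), knA_odd_high l u hu.1 (by omega)]
          ring
        rw [L2, R2]
        refine ico_pair l
          (fun u => TB l (2*k) u * GA j (l+1) (2*l+2-u))
          (fun u => TB l (2*k) u * GA j (l+1) (2*l+1-u))
          (fun u => (TA l (k-1) (2*u) + TA l k (2*u)) * GA j (l+1) (2*l+2-u))
          (fun u => (TA l (k-1) (2*u+1) + TA l k (2*u+1)) * GA j (l+1) (2*l+1-u)) ?_ ?_ ?_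
        · show TB l (2*k) (l+1) * GA j (l+1) (2*l+2-(l+1))
            = (TA l (k-1) (2*(l+1)) + TA l k (2*(l+1))) * GA j (l+1) (2*l+2-(l+1))
          rw [TA_even l (k-1) (l+1) (by omega) (by omega), TA_even l k (l+1) (by omega) (by omega),
            TB_high l (2*k) (l+1) (by omega) (by omega) (by omega)]
          have hq : Qpoly (2*l+1) (l+1+(k-1)) (l+1+(k-1)-(2*l+1))
                + Qpoly (2*l+1) (l+1+k) (l+1+k-(2*l+1))
              = Qpoly (4*l+2) (2*(l+1)-1+2*k) (2*(l+1)-1+2*k-(4*l+2)) := by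
            rw [Qpoly_add]; exact Qpoly_congr (by omega) (by omega) (by omega)
          linear_combination (GA j (l+1) (2*l+2-(l+1))) * hq.symm
        · show TB l (2*k) (2*l+1) * GA j (l+1) (2*l+1-(2*l+1))
            = (TA l (k-1) (2*(2*l+1)+1) + TA l k (2*(2*l+1)+1)) * GA j (l+1) (2*l+1-(2*l+1))
          rw [TA_odd_high l (k-1) (2*l+1) (by omega) (by omega) (by omega),
            TA_odd_high l k (2*l+1) (by omega) (by omega) (by omega),
            TB_high l (2*k) (2*l+1) (by omega) (by omega) (by omega)]
          have hq : Qpoly (2*l+1) (2*l+1+(k-1)) (2*l+1+(k-1)-(2*l+1))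
                + Qpoly (2*l+1) (2*l+1+k) (2*l+1+k-(2*l+1))
              = Qpoly (4*l+2) (2*(2*l+1)-1+2*k) (2*(2*l+1)-1+2*k-(4*l+2)) := by
            rw [Qpoly_add]; exact Qpoly_congr (by omega) (by omega) (by omega)
          linear_combination (GA j (l+1) (2*l+1-(2*l+1))) * hq.symm
        · intro u hu1 hu2
          show TB l (2*k) (u+1) * GA j (l+1) (2*l+2-(u+1)) + TB l (2*k) u * GA j (l+1) (2*l+1-u)
            = (TA l (k-1) (2*(u+1)) + TA l k (2*(u+1))) * GA j (l+1) (2*l+2-(u+1))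
              + (TA l (k-1) (2*u+1) + TA l k (2*u+1)) * GA j (l+1) (2*l+1-u)
          rw [show 2*l+2-(u+1) = 2*l+1-u from by omega]
          rw [TA_even l (k-1) (u+1) (by omega) (by omega), TA_even l k (u+1) (by omega) (by omega),
            TA_odd_high l (k-1) u (by omega) (by omega) (by omega),
            TA_odd_high l k u (by omega) (by omega) (by omega),
            TB_high l (2*k) (u+1) (by omega) (by omega) (by omega),
            TB_high l (2*k) u (by omega) (by omega) (by omega)]
          have hq1 : Qpoly (2*l+1) (u+1+(k-1)) (u+1+(k-1)-(2*l+1))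
                + Qpoly (2*l+1) (u+1+k) (u+1+k-(2*l+1))
              = Qpoly (4*l+2) (2*(u+1)-1+2*k) (2*(u+1)-1+2*k-(4*l+2)) := by
            rw [Qpoly_add]; exact Qpoly_congr (by omega) (by omega) (by omega)
          have hq2 : Qpoly (2*l+1) (u+(k-1)) (u+(k-1)-(2*l+1))
                + Qpoly (2*l+1) (u+k) (u+k-(2*l+1))
              = Qpoly (4*l+2) (2*u-1+2*k) (2*u-1+2*k-(4*l+2)) := by
            rw [Qpoly_add]; exact Qpoly_congr (by omega) (by omega) (by omega)
          linear_combination (GA j (l+1) (2*l+1-u)) * hq1.symm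
            + (GA j (l+1) (2*l+1-u)) * hq2.symm

theorem bridgeA (j : ℕ) : ∀ (l : ℕ) (s : ℕ → ℕ), (∀ r, 1 ≤ r → s r = sA (2*l+r)) →
    ∀ (v d : ℕ), 0 < d →
    ∑ e ∈ invSeqs s (2*j), (Polynomial.X : Polynomial ℤ)^(ascV v d s e)
      = GA j l (cntA l v d) := by
  induction j with
  | zero =>
    intro l s hs v d hd
    simp only [Nat.mul_zero]
    rw [show GA 0 l (cntA l v d) = 1 from rfl]
    simp [invSeqs, ascV]
  | succ j IH =>
    intro l s hs v d hd
    have hs1 : s 1 = 2*l+1 := by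
      rw [hs 1 (by omega)]; unfold sA
      have h : (2*l+1) % 2 = 1 := by omega
      rw [if_pos h]
    have hs2 : s 2 = 4*l+4 := by
      rw [hs 2 (by omega)]; unfold sA
      have h : ¬ ((2*l+2) % 2 = 1) := by omega
      rw [if_neg h]; ring
    have hiff : ∀ a, a < 2*l+1 → (((v:ℚ)/(d:ℚ) < (a:ℚ)/((2*l+1 : ℕ) : ℚ)) ↔ (2*l+1 ≤ a + cntA l v d)) := by
      intro a ha
      have h1 : ((v:ℚ)/(d:ℚ) < (a:ℚ)/((2*l+1 : ℕ) : ℚ)) ↔ v * (2*l+1) < a * d := by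
        rw [div_lt_div_iff₀ (by positivity) (by exact_mod_cast Nat.succ_pos (2*l))]
        exact_mod_cast Iff.rfl
      rw [h1]
      exact seg (2*l+1) (fun x => v*(2*l+1) < x*d)
        (fun x y hxy hx => lt_of_lt_of_le hx (Nat.mul_le_mul_right d hxy)) a ha
    show ∑ e ∈ invSeqs s (2*j+1+1), (Polynomial.X : Polynomial ℤ)^(ascV v d s e) = _
    unfold invSeqs
    rw [sum_piFinset_cons]
    simp only [Fin.val_succ, Fin.val_zero, Nat.zero_add, Nat.reduceAdd, ascV_cons, pow_add, hs1, hs2]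
    rw [show GA (j+1) l (cntA l v d) = ∑ a ∈ Finset.range (2*l+1), ∑ b ∈ Finset.range (4*l+4),
      (Polynomial.X : Polynomial ℤ)^(wA l (cntA l v d) a b) * GA j (l+1) (knA l b) from rfl]
    apply Finset.sum_congr rfl
    intro a ha
    rw [Finset.mem_range] at ha
    rw [← Finset.mul_sum]
    rw [if_congr (hiff a ha) rfl rfl]
    rw [sum_piFinset_cons (fun i : Fin (2*j+1) => Finset.range (s ((i : ℕ) + 1 + 1)))]
    simp only [Fin.val_succ, Fin.val_zero, Nat.zero_add, Nat.reduceAdd, ascV_cons, pow_add, hs1, hs2]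
    rw [Finset.mul_sum]
    apply Finset.sum_congr rfl
    intro b hb
    rw [Finset.mem_range] at hb
    rw [← Finset.mul_sum]
    have hiff2 : ((a:ℚ)/((2*l+1 : ℕ) : ℚ) < (b:ℚ)/((4*l+4 : ℕ) : ℚ)) ↔ (a*(4*l+4) < b*(2*l+1)) := by
      rw [div_lt_div_iff₀ (by exact_mod_cast Nat.succ_pos (2*l)) (by positivity)]
      exact_mod_cast Iff.rfl
    have hIH := IH (l+1) (fun r => s (r+1+1)) (by
      intro r hr
      show s (r+1+1) = _
      rw [hs (r+2) (by omega)]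
      have : 2*l+(r+2) = 2*(l+1)+r := by ring
      rw [this]) b (4*l+4) (by omega)
    rw [show cntA (l+1) b (4*l+4) = knA l b from rfl] at hIH
    rw [show (invSeqs (fun r => s (r+1+1)) (2*j) : Finset (Fin (2*j) → ℕ))
      = Fintype.piFinset (fun i : Fin (2*j) => Finset.range (s ((i:ℕ)+1+1+1))) from rfl] at hIH
    rw [hIH, wA, pow_add]
    rw [if_congr hiff2 rfl rfl]
    ring

theorem bridgeB (j : ℕ) : ∀ (l : ℕ) (s : ℕ → ℕ), (∀ r, 1 ≤ r → s r = sB (2*l+r)) →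
    ∀ (v d : ℕ), 0 < d →
    ∑ e ∈ invSeqs s (2*j), (Polynomial.X : Polynomial ℤ)^(ascV v d s e)
      = GB j l (cntB l v d) := by
  induction j with
  | zero =>
    intro l s hs v d hd
    simp only [Nat.mul_zero]
    rw [show GB 0 l (cntB l v d) = 1 from rfl]
    simp [invSeqs, ascV]
  | succ j IH =>
    intro l s hs v d hd
    have hs1 : s 1 = 4*l+2 := by
      rw [hs 1 (by omega)]; unfold sB
      have h : (2*l+1) % 2 = 1 := by omega
      rw [if_pos h]; ring
    have hs2 : s 2 = 2*l+2 := by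
      rw [hs 2 (by omega)]; unfold sB
      have h : ¬ ((2*l+2) % 2 = 1) := by omega
      rw [if_neg h]
    have hiff : ∀ a, a < 4*l+2 → (((v:ℚ)/(d:ℚ) < (a:ℚ)/((4*l+2 : ℕ) : ℚ)) ↔ (4*l+2 ≤ a + cntB l v d)) := by
      intro a ha
      have h1 : ((v:ℚ)/(d:ℚ) < (a:ℚ)/((4*l+2 : ℕ) : ℚ)) ↔ v * (4*l+2) < a * d := by
        rw [div_lt_div_iff₀ (by positivity) (by exact_mod_cast Nat.succ_pos (4*l+1))]
        exact_mod_cast Iff.rfl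
      rw [h1]
      exact seg (4*l+2) (fun x => v*(4*l+2) < x*d)
        (fun x y hxy hx => lt_of_lt_of_le hx (Nat.mul_le_mul_right d hxy)) a ha
    show ∑ e ∈ invSeqs s (2*j+1+1), (Polynomial.X : Polynomial ℤ)^(ascV v d s e) = _
    unfold invSeqs
    rw [sum_piFinset_cons]
    simp only [Fin.val_succ, Fin.val_zero, Nat.zero_add, Nat.reduceAdd, ascV_cons, pow_add, hs1, hs2]
    rw [show GB (j+1) l (cntB l v d) = ∑ a ∈ Finset.range (4*l+2), ∑ b ∈ Finset.range (2*l+2),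
      (Polynomial.X : Polynomial ℤ)^(wB l (cntB l v d) a b) * GB j (l+1) (knB l b) from rfl]
    apply Finset.sum_congr rfl
    intro a ha
    rw [Finset.mem_range] at ha
    rw [← Finset.mul_sum]
    rw [if_congr (hiff a ha) rfl rfl]
    rw [sum_piFinset_cons (fun i : Fin (2*j+1) => Finset.range (s ((i : ℕ) + 1 + 1)))]
    simp only [Fin.val_succ, Fin.val_zero, Nat.zero_add, Nat.reduceAdd, ascV_cons, pow_add, hs1, hs2]
    rw [Finset.mul_sum]
    apply Finset.sum_congr rfl
    intro b hb
    rw [Finset.mem_range] at hb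
    rw [← Finset.mul_sum]
    have hiff2 : ((a:ℚ)/((4*l+2 : ℕ) : ℚ) < (b:ℚ)/((2*l+2 : ℕ) : ℚ)) ↔ (a*(2*l+2) < b*(4*l+2)) := by
      rw [div_lt_div_iff₀ (by exact_mod_cast Nat.succ_pos (4*l+1)) (by positivity)]
      exact_mod_cast Iff.rfl
    have hIH := IH (l+1) (fun r => s (r+1+1)) (by
      intro r hr
      show s (r+1+1) = _
      rw [hs (r+2) (by omega)]
      have : 2*l+(r+2) = 2*(l+1)+r := by ring
      rw [this]) b (2*l+2) (by omega)
    rw [show cntB (l+1) b (2*l+2) = knB l b from rfl] at hIH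
    rw [show (invSeqs (fun r => s (r+1+1)) (2*j) : Finset (Fin (2*j) → ℕ))
      = Fintype.piFinset (fun i : Fin (2*j) => Finset.range (s ((i:ℕ)+1+1+1))) from rfl] at hIH
    rw [hIH, wB, pow_add]
    rw [if_congr hiff2 rfl rfl]
    ring


lemma asc_eq_ascV {m : ℕ} (s : ℕ → ℕ) (e : Fin m → ℕ) : asc s e = ascV 0 1 s e := by
  unfold asc ascV
  apply congrArg
  apply Finset.filter_congr
  intro i _
  norm_num

theorem stmt19' (n : ℕ) :
    ∑ e ∈ invSeqs sA (2 * n), (Polynomial.X : Polynomial ℤ) ^ asc sA e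
      = ∑ e ∈ invSeqs sB (2 * n), (Polynomial.X : Polynomial ℤ) ^ asc sB e := by
  have hA : ∑ e ∈ invSeqs sA (2 * n), (Polynomial.X : Polynomial ℤ) ^ asc sA e
      = GA n 0 (cntA 0 0 1) := by
    rw [Finset.sum_congr rfl (fun e _ => by rw [asc_eq_ascV])]
    exact bridgeA n 0 sA (fun r hr => by norm_num) 0 1 one_pos
  have hB : ∑ e ∈ invSeqs sB (2 * n), (Polynomial.X : Polynomial ℤ) ^ asc sB e
      = GB n 0 (cntB 0 0 1) := by
    rw [Finset.sum_congr rfl (fun e _ => by rw [asc_eq_ascV])]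
    exact bridgeB n 0 sB (fun r hr => by norm_num) 0 1 one_pos
  have hcA : cntA 0 0 1 = 0 := by decide
  have hcB : cntB 0 0 1 = 1 := by decide
  rw [hA, hB, hcA, hcB]
  have h := (core_ind n).1 0 0 (by omega)
  have h2 : (2 : Polynomial ℤ) ≠ 0 := by norm_num
  exact mul_left_cancel₀ h2 (by simpa using h)


end Aux

open Polynomial PowerSeries

theorem stmt19 (n : ℕ) (hn : 1 ≤ n) :
    ∑ e ∈ invSeqs sA (2 * n), (Polynomial.X : Polynomial ℤ) ^ asc sA e
      = ∑ e ∈ invSeqs sB (2 * n), (Polynomial.X : Polynomial ℤ) ^ asc sB e := by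
  exact stmt19' n
end
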